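/- If F : C ⟶ D and G : D ⟶ C are dagger functors between dagger categories with F left adjoint to G via a natural bijection θ : Hom(F A, B) ≅ Hom(A, G B), then G is also left adjoint to F, via the natural bijection Hom(G A, B) ≅ Hom(A, F B) sending f to θ(f†)†. -/
import Mathlib


open CategoryTheory

/-- A dagger on a category: an involutive, identity-on-objects, contravariant endofunctor. -/
class DaggerCategory (C : Type*) [Category C] where
  dag : ∀ {A B : C}, (A ⟶ B) → (B ⟶ A)
  dag_id : ∀ (A : C), dag (𝟙 A) = 𝟙 A
  dag_comp : ∀ {A B D : C} (f : A ⟶ B) (g : B ⟶ D), dag (f ≫ g) = dag g ≫ dag f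
  dag_dag : ∀ {A B : C} (f : A ⟶ B), dag (dag f) = f

open DaggerCategory
/-- A dagger adjunction goes both ways: if `F ⊣ G` with both functors dagger functors,
then `G ⊣ F` via the bijection `f ↦ θ(f†)†`. -/
theorem dagger_adjunction_symm {C D : Type*} [Category C] [Category D]
    [DaggerCategory C] [DaggerCategory D] (F : C ⥤ D) (G : D ⥤ C)
    (hF : ∀ {A B : C} (f : A ⟶ B), F.map (dag f) = dag (F.map f))
    (hG : ∀ {A B : D} (f : A ⟶ B), G.map (dag f) = dag (G.map f))
    (adj : F ⊣ G) :
    ∃ adj' : G ⊣ F, ∀ (A : D) (B : C) (f : G.obj A ⟶ B),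
      adj'.homEquiv A B f = dag ((adj.homEquiv B A).symm (dag f)) := by
  refine ⟨Adjunction.mkOfHomEquiv
    { homEquiv := fun A B =>
        { toFun := fun f => dag ((adj.homEquiv B A).symm (dag f))
          invFun := fun g => dag ((adj.homEquiv B A) (dag g))
          left_inv := fun f => by simp [dag_dag]
          right_inv := fun g => by simp [dag_dag] }
      homEquiv_naturality_left_symm := ?_
      homEquiv_naturality_right := ?_ }, fun A B f => ?_⟩
  · intro A' A B f g
    simp only [Equiv.coe_fn_symm_mk, dag_comp, Adjunction.homEquiv_naturality_right,
      hG, dag_dag]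
  · intro A B B' f g
    simp only [Equiv.coe_fn_mk, Adjunction.homEquiv_naturality_left_symm, dag_comp,
      hF, dag_dag]
  · simp [Adjunction.mkOfHomEquiv, Adjunction.mk'_homEquiv]
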